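/- Singular value thresholding solves the nuclear-norm proximal problem: for a matrix Y ∈ ℂ^{m×n} with SVD Y = U Σ V*, and τ > 0, the matrix U D_τ(Σ) V* with D_τ(Σ) = diag(max(σ_i − τ, 0)) is the unique minimizer over W of τ‖W‖_* + (1/2)‖W − Y‖_F². -/

import Mathlib

open Finset Complex Matrix
open scoped ComplexOrder

/-- Nuclear norm of a matrix: sum of singular values, i.e. `Re (trace √(Mᴴ M))`. -/
noncomputable def nuclearNorm {m n : Type*} [Fintype m] [Fintype n] [DecidableEq n]
    (M : Matrix m n ℂ) : ℝ :=
  ((Matrix.posSemidef_conjTranspose_mul_self M).isHermitian.eigenvectorUnitary.1 *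
    diagonal ((fun x : ℝ => (x : ℂ)) ∘ Real.sqrt ∘ (Matrix.posSemidef_conjTranspose_mul_self M).isHermitian.eigenvalues) *
    (star (Matrix.posSemidef_conjTranspose_mul_self M).isHermitian.eigenvectorUnitary :
      Matrix n n ℂ)).trace.re

/-- Squared Frobenius norm of a matrix. -/
noncomputable def frobM2 {m n : Type*} [Fintype m] [Fintype n] (M : Matrix m n ℂ) : ℝ :=
  ∑ i, ∑ j, ‖M i j‖ ^ 2

/-- The old `Matrix.PosSemidef.sqrt`. -/
noncomputable def Matrix.PosSemidef.sqrt {n : Type*} [Fintype n] [DecidableEq n]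
    {A : Matrix n n ℂ} (hA : A.PosSemidef) : Matrix n n ℂ :=
  hA.isHermitian.eigenvectorUnitary.1 *
    diagonal ((fun x : ℝ => (x : ℂ)) ∘ Real.sqrt ∘ hA.isHermitian.eigenvalues) *
    (star hA.isHermitian.eigenvectorUnitary : Matrix n n ℂ)

lemma nuclearNorm_eq_sqrt_trace {m n : Type*} [Fintype m] [Fintype n] [DecidableEq n]
    (M : Matrix m n ℂ) :
    nuclearNorm M = (Matrix.posSemidef_conjTranspose_mul_self M).sqrt.trace.re := rfl

open scoped MatrixOrder in
lemma Matrix.PosSemidef.sqrt_eq_cfcSqrt {n : Type*} [Fintype n] [DecidableEq n]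
    {A : Matrix n n ℂ} (hA : A.PosSemidef) : hA.sqrt = CFC.sqrt A := by
  rw [CFC.sqrt_eq_cfc, cfc_nnreal_eq_real _ A, hA.1.cfc_eq, Matrix.IsHermitian.cfc,
    Unitary.conjStarAlgAut_apply, Matrix.PosSemidef.sqrt]
  congr 3
  funext i
  simp only [Function.comp_apply, Real.coe_sqrt, Real.coe_toNNReal',
    max_eq_left (hA.eigenvalues_nonneg i)] <;> rfl

open scoped MatrixOrder in
lemma Matrix.PosSemidef.posSemidef_sqrt {n : Type*} [Fintype n] [DecidableEq n]
    {A : Matrix n n ℂ} (hA : A.PosSemidef) : hA.sqrt.PosSemidef := by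
  rw [hA.sqrt_eq_cfcSqrt]
  exact Matrix.nonneg_iff_posSemidef.mp (CFC.sqrt_nonneg A)

open scoped MatrixOrder in
lemma Matrix.PosSemidef.sqrt_mul_self {n : Type*} [Fintype n] [DecidableEq n]
    {A : Matrix n n ℂ} (hA : A.PosSemidef) : hA.sqrt * hA.sqrt = A := by
  rw [hA.sqrt_eq_cfcSqrt]
  exact CFC.sqrt_mul_sqrt_self A (Matrix.nonneg_iff_posSemidef.mpr hA)

open scoped MatrixOrder in
lemma Matrix.PosSemidef.eq_sqrt_of_sq_eq {n : Type*} [Fintype n] [DecidableEq n]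
    {A B : Matrix n n ℂ} (hA : A.PosSemidef) (hB : B.PosSemidef) (hAB : A ^ 2 = B) :
    A = hB.sqrt := by
  rw [hB.sqrt_eq_cfcSqrt]
  exact (CFC.sqrt_unique (by rw [← pow_two]; exact hAB) (Matrix.nonneg_iff_posSemidef.mpr hA)).symm

lemma frobM2_eq_trace {m n : Type*} [Fintype m] [Fintype n] (M : Matrix m n ℂ) :
    frobM2 M = (Mᴴ * M).trace.re := by
  simp only [frobM2, Matrix.trace, Matrix.diag, Matrix.mul_apply, Matrix.conjTranspose_apply]
  rw [Complex.re_sum]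
  rw [Finset.sum_comm]
  congr 1; ext i
  rw [Complex.re_sum]
  congr 1; ext j
  rw [Complex.sq_norm]
  rw [show star (M j i) = (starRingEnd ℂ) (M j i) from rfl, ← Complex.normSq_eq_conj_mul_self]
  simp

lemma frobM2_unitary {m n : ℕ} (U : Matrix (Fin m) (Fin m) ℂ) (V : Matrix (Fin n) (Fin n) ℂ)
    (hU : U ∈ Matrix.unitaryGroup (Fin m) ℂ) (hV : V ∈ Matrix.unitaryGroup (Fin n) ℂ)
    (A : Matrix (Fin m) (Fin n) ℂ) : frobM2 (U * A * Vᴴ) = frobM2 A := by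
  rw [frobM2_eq_trace, frobM2_eq_trace]
  have hU' : Uᴴ * U = 1 := Matrix.mem_unitaryGroup_iff'.mp hU
  have hV' : Vᴴ * V = 1 := Matrix.mem_unitaryGroup_iff'.mp hV
  have hV'' : V * Vᴴ = 1 := Matrix.mem_unitaryGroup_iff.mp hV
  have : (U * A * Vᴴ)ᴴ * (U * A * Vᴴ) = V * (Aᴴ * A) * Vᴴ := by
    simp only [Matrix.conjTranspose_mul, Matrix.conjTranspose_conjTranspose]
    calc V * (Aᴴ * Uᴴ) * (U * A * Vᴴ) = V * (Aᴴ * ((Uᴴ * U) * A)) * Vᴴ := by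
          simp only [Matrix.mul_assoc]
      _ = V * (Aᴴ * A) * Vᴴ := by rw [hU', Matrix.one_mul, Matrix.mul_assoc]
  rw [this, Matrix.trace_mul_cycle, ← Matrix.mul_assoc, hV', Matrix.one_mul]

lemma sqrt_congr {n : Type*} [Fintype n] [DecidableEq n] {A B : Matrix n n ℂ}
    (hA : A.PosSemidef) (hB : B.PosSemidef) (h : A = B) : hA.sqrt = hB.sqrt := by
  subst h; rfl

lemma sqrt_unitary_conj {n : ℕ} {A : Matrix (Fin n) (Fin n) ℂ} (hA : A.PosSemidef)
    (V : Matrix (Fin n) (Fin n) ℂ) (hV : V ∈ Matrix.unitaryGroup (Fin n) ℂ) :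
    (hA.mul_mul_conjTranspose_same V).sqrt = V * hA.sqrt * Vᴴ := by
  have hV' : Vᴴ * V = 1 := Matrix.mem_unitaryGroup_iff'.mp hV
  refine ((hA.posSemidef_sqrt.mul_mul_conjTranspose_same V).eq_sqrt_of_sq_eq _ ?_).symm
  rw [pow_two]
  calc V * hA.sqrt * Vᴴ * (V * hA.sqrt * Vᴴ)
      = V * (hA.sqrt * ((Vᴴ * V) * hA.sqrt)) * Vᴴ := by simp only [Matrix.mul_assoc]
    _ = V * A * Vᴴ := by rw [hV', Matrix.one_mul, hA.sqrt_mul_self]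

lemma nuclearNorm_unitary {m n : ℕ} (U : Matrix (Fin m) (Fin m) ℂ) (V : Matrix (Fin n) (Fin n) ℂ)
    (hU : U ∈ Matrix.unitaryGroup (Fin m) ℂ) (hV : V ∈ Matrix.unitaryGroup (Fin n) ℂ)
    (A : Matrix (Fin m) (Fin n) ℂ) : nuclearNorm (U * A * Vᴴ) = nuclearNorm A := by
  have hU' : Uᴴ * U = 1 := Matrix.mem_unitaryGroup_iff'.mp hU
  have hV' : Vᴴ * V = 1 := Matrix.mem_unitaryGroup_iff'.mp hV
  have key : (U * A * Vᴴ)ᴴ * (U * A * Vᴴ) = V * (Aᴴ * A) * Vᴴ := by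
    simp only [Matrix.conjTranspose_mul, Matrix.conjTranspose_conjTranspose]
    calc V * (Aᴴ * Uᴴ) * (U * A * Vᴴ) = V * (Aᴴ * ((Uᴴ * U) * A)) * Vᴴ := by
          simp only [Matrix.mul_assoc]
      _ = V * (Aᴴ * A) * Vᴴ := by rw [hU', Matrix.one_mul, Matrix.mul_assoc]
  rw [nuclearNorm_eq_sqrt_trace, nuclearNorm_eq_sqrt_trace]
  rw [sqrt_congr (Matrix.posSemidef_conjTranspose_mul_self (U * A * Vᴴ))
      ((Matrix.posSemidef_conjTranspose_mul_self A).mul_mul_conjTranspose_same V) key,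
    sqrt_unitary_conj _ V hV, Matrix.trace_mul_cycle, hV',
    Matrix.one_mul]

/-- Collapse the inner sum over the diagonal condition. -/
lemma inner_diag_sum {n : ℕ} (k : ℕ) (ψ : Fin n → ℝ) :
    ∑ j : Fin n, (if k = (j : ℕ) then ψ j else 0)
      = if h : k < n then ψ ⟨k, h⟩ else 0 := by
  by_cases h : k < n
  · rw [dif_pos h]
    rw [show (∑ j : Fin n, (if k = (j : ℕ) then ψ j else 0))
        = ∑ j : Fin n, (if j = ⟨k, h⟩ then ψ j else 0) from
      Finset.sum_congr rfl (fun j _ => by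
        refine if_congr ?_ rfl rfl
        constructor
        · intro hj; exact Fin.ext hj.symm
        · intro hj; subst hj; rfl)]
    simp
  · rw [dif_neg h]
    refine Finset.sum_eq_zero (fun j _ => ?_)
    rw [if_neg]
    intro hj
    exact h (hj ▸ j.isLt)

/-- Diagonal double sum as a sum over `range (min m n)`. -/
lemma diag_double_sum {m n : ℕ} (f : Fin m → Fin n → ℝ) :
    ∑ i : Fin m, ∑ j : Fin n, (if (i : ℕ) = (j : ℕ) then f i j else 0)
      = ∑ k ∈ Finset.range (min m n),
          (if h : k < m ∧ k < n then f ⟨k, h.1⟩ ⟨k, h.2⟩ else 0) := by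
  have h1 : ∀ i : Fin m, ∑ j : Fin n, (if (i : ℕ) = (j : ℕ) then f i j else 0)
      = if h : (i : ℕ) < n then f i ⟨(i : ℕ), h⟩ else 0 := fun i =>
    inner_diag_sum (i : ℕ) (fun j => f i j)
  calc ∑ i : Fin m, ∑ j : Fin n, (if (i : ℕ) = (j : ℕ) then f i j else 0)
      = ∑ i : Fin m, (if h : (i : ℕ) < m ∧ (i : ℕ) < n then f ⟨(i : ℕ), h.1⟩ ⟨(i : ℕ), h.2⟩ else 0) := by
        refine Finset.sum_congr rfl (fun i _ => ?_)
        rw [h1 i]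
        by_cases h : (i : ℕ) < n
        · rw [dif_pos h, dif_pos ⟨i.isLt, h⟩]
        · rw [dif_neg h, dif_neg (fun hc => h hc.2)]
    _ = ∑ k ∈ Finset.range m, (if h : k < m ∧ k < n then f ⟨k, h.1⟩ ⟨k, h.2⟩ else 0) :=
        Fin.sum_univ_eq_sum_range (fun k => if h : k < m ∧ k < n then f ⟨k, h.1⟩ ⟨k, h.2⟩ else 0) m
    _ = ∑ k ∈ Finset.range (min m n), (if h : k < m ∧ k < n then f ⟨k, h.1⟩ ⟨k, h.2⟩ else 0) := by
        refine (Finset.sum_subset (Finset.range_subset_range.mpr (min_le_left m n)) ?_).symm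
        intro x hx hnx
        rw [Finset.mem_range] at hx
        rw [Finset.mem_range, not_lt] at hnx
        rw [dif_neg]
        intro hc
        exact absurd (lt_min hc.1 hc.2) (not_lt.mpr hnx)

/-- Cauchy–Schwarz on the diagonal pairing. -/
lemma diag_pair_CS {m n : ℕ} (a : Fin m → ℝ) (b : Fin n → ℝ)
    (ha : ∀ i, 0 ≤ a i) (hb : ∀ j, 0 ≤ b j) :
    ∑ i : Fin m, ∑ j : Fin n, (if (i : ℕ) = (j : ℕ) then a i * b j else 0)
      ≤ Real.sqrt (∑ i, a i ^ 2) * Real.sqrt (∑ j, b j ^ 2) := by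
  rw [diag_double_sum]
  set a' : ℕ → ℝ := fun k => if h : k < m then a ⟨k, h⟩ else 0 with ha'
  set b' : ℕ → ℝ := fun k => if h : k < n then b ⟨k, h⟩ else 0 with hb'
  have ha'0 : ∀ k, 0 ≤ a' k := fun k => by
    by_cases h : k < m
    · simp only [ha', dif_pos h]; exact ha _
    · simp only [ha', dif_neg h]; exact le_refl 0
  have hb'0 : ∀ k, 0 ≤ b' k := fun k => by
    by_cases h : k < n
    · simp only [hb', dif_pos h]; exact hb _
    · simp only [hb', dif_neg h]; exact le_refl 0
  have step1 : ∑ k ∈ Finset.range (min m n),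
      (if h : k < m ∧ k < n then a ⟨k, h.1⟩ * b ⟨k, h.2⟩ else 0)
      = ∑ k ∈ Finset.range (min m n), a' k * b' k := by
    refine Finset.sum_congr rfl (fun k hk => ?_)
    rw [Finset.mem_range, lt_min_iff] at hk
    rw [dif_pos hk]
    simp only [ha', hb', dif_pos hk.1, dif_pos hk.2]
  rw [step1]
  have CS : (∑ k ∈ Finset.range (min m n), a' k * b' k) ^ 2
      ≤ (∑ k ∈ Finset.range (min m n), a' k ^ 2) * ∑ k ∈ Finset.range (min m n), b' k ^ 2 :=
    Finset.sum_mul_sq_le_sq_mul_sq _ _ _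
  have hab0 : 0 ≤ ∑ k ∈ Finset.range (min m n), a' k * b' k :=
    Finset.sum_nonneg (fun k _ => mul_nonneg (ha'0 k) (hb'0 k))
  have h2 : ∑ k ∈ Finset.range (min m n), a' k * b' k
      ≤ Real.sqrt ((∑ k ∈ Finset.range (min m n), a' k ^ 2)
          * ∑ k ∈ Finset.range (min m n), b' k ^ 2) := by
    rw [← Real.sqrt_sq hab0]
    exact Real.sqrt_le_sqrt CS
  refine h2.trans ?_
  rw [Real.sqrt_mul (Finset.sum_nonneg (fun k _ => sq_nonneg _))]
  have hA : ∑ k ∈ Finset.range (min m n), a' k ^ 2 ≤ ∑ i : Fin m, a i ^ 2 := by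
    rw [show (∑ i : Fin m, a i ^ 2) = ∑ k ∈ Finset.range m, a' k ^ 2 by
      rw [← Fin.sum_univ_eq_sum_range (fun k => a' k ^ 2)]
      refine Finset.sum_congr rfl (fun i _ => ?_)
      simp only [ha', dif_pos i.isLt]]
    refine Finset.sum_le_sum_of_subset_of_nonneg
      (Finset.range_subset_range.mpr (min_le_left m n)) (fun k _ _ => sq_nonneg _)
  have hB : ∑ k ∈ Finset.range (min m n), b' k ^ 2 ≤ ∑ j : Fin n, b j ^ 2 := by
    rw [show (∑ j : Fin n, b j ^ 2) = ∑ k ∈ Finset.range n, b' k ^ 2 by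
      rw [← Fin.sum_univ_eq_sum_range (fun k => b' k ^ 2)]
      refine Finset.sum_congr rfl (fun j _ => ?_)
      simp only [hb', dif_pos j.isLt]]
    refine Finset.sum_le_sum_of_subset_of_nonneg
      (Finset.range_subset_range.mpr (min_le_right m n)) (fun k _ _ => sq_nonneg _)
  exact mul_le_mul (Real.sqrt_le_sqrt hA) (Real.sqrt_le_sqrt hB)
    (Real.sqrt_nonneg _) (Real.sqrt_nonneg _)

lemma nuclearNorm_eq_sum_sqrt {m n : ℕ} (X : Matrix (Fin m) (Fin n) ℂ) :
    nuclearNorm X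
      = ∑ j : Fin n, Real.sqrt ((Matrix.posSemidef_conjTranspose_mul_self X).1.eigenvalues j) := by
  set hH := Matrix.posSemidef_conjTranspose_mul_self X
  rw [nuclearNorm_eq_sqrt_trace]
  rw [Matrix.PosSemidef.sqrt]
  set V : Matrix (Fin n) (Fin n) ℂ := (hH.1.eigenvectorUnitary : Matrix (Fin n) (Fin n) ℂ) with hVdef
  have h1 : star V * V = 1 := Matrix.mem_unitaryGroup_iff'.mp hH.1.eigenvectorUnitary.2
  rw [Matrix.trace_mul_cycle, h1, Matrix.one_mul, Matrix.trace_diagonal]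
  rw [Complex.re_sum]
  rfl

lemma diag_abs_le_nuclearNorm {m n : ℕ} (X : Matrix (Fin m) (Fin n) ℂ) :
    ∑ i : Fin m, ∑ j : Fin n, (if (i : ℕ) = (j : ℕ) then ‖X i j‖ else 0)
      ≤ nuclearNorm X := by
  set hH := Matrix.posSemidef_conjTranspose_mul_self X
  set V : Matrix (Fin n) (Fin n) ℂ := (hH.1.eigenvectorUnitary : Matrix (Fin n) (Fin n) ℂ) with hVdef
  set lam : Fin n → ℝ := hH.1.eigenvalues with hlam
  have hlam0 : ∀ l, 0 ≤ lam l := fun l => hH.eigenvalues_nonneg l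
  have hsVV : star V * V = 1 := Matrix.mem_unitaryGroup_iff'.mp hH.1.eigenvectorUnitary.2
  have hVsV : V * star V = 1 := Matrix.mem_unitaryGroup_iff.mp hH.1.eigenvectorUnitary.2
  have hdiag : star V * (Xᴴ * X) * V = Matrix.diagonal (RCLike.ofReal ∘ lam) :=
    by
      have h := hH.1.conjStarAlgAut_star_eigenvectorUnitary
      rw [Unitary.conjStarAlgAut_star_apply] at h
      exact h
  set B : Matrix (Fin m) (Fin n) ℂ := X * V with hBdef
  have hBB : Bᴴ * B = Matrix.diagonal (RCLike.ofReal ∘ lam) := by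
    rw [hBdef, Matrix.conjTranspose_mul, ← hdiag, Matrix.star_eq_conjTranspose]
    simp only [Matrix.mul_assoc]
  have hBcol : ∀ l, ∑ i : Fin m, ‖B i l‖ ^ 2 = lam l := by
    intro l
    have := congrArg (fun M => (M l l).re) hBB
    simp only [Matrix.mul_apply, Matrix.conjTranspose_apply, Matrix.diagonal_apply_eq,
      Function.comp_apply] at this
    rw [Complex.re_sum] at this
    rw [show ((RCLike.ofReal (lam l) : ℂ)).re = lam l from Complex.ofReal_re _] at this
    rw [← this]
    refine Finset.sum_congr rfl (fun i _ => ?_)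
    rw [Complex.sq_norm]
    rw [show star (B i l) = (starRingEnd ℂ) (B i l) from rfl, ← Complex.normSq_eq_conj_mul_self]
    simp
  have hVcol : ∀ l, ∑ j : Fin n, ‖V j l‖ ^ 2 = 1 := by
    intro l
    have := congrArg (fun M => (M l l).re) hsVV
    simp only [Matrix.mul_apply, Matrix.star_eq_conjTranspose, Matrix.conjTranspose_apply,
      Matrix.one_apply_eq] at this
    rw [Complex.re_sum, Complex.one_re] at this
    rw [← this]
    · refine Finset.sum_congr rfl (fun j _ => ?_)
      rw [Complex.sq_norm]
      rw [show star (V j l) = (starRingEnd ℂ) (V j l) from rfl, ← Complex.normSq_eq_conj_mul_self]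
      simp
  have hXrep : ∀ i j, X i j = ∑ l : Fin n, B i l * (starRingEnd ℂ) (V j l) := by
    intro i j
    have : X = B * Vᴴ := by
      rw [hBdef, Matrix.mul_assoc, ← Matrix.star_eq_conjTranspose, hVsV, Matrix.mul_one]
    conv_lhs => rw [this]
    simp [Matrix.mul_apply, Matrix.conjTranspose_apply]
  calc ∑ i : Fin m, ∑ j : Fin n, (if (i : ℕ) = (j : ℕ) then ‖X i j‖ else 0)
      ≤ ∑ i : Fin m, ∑ j : Fin n, ∑ l : Fin n,
          (if (i : ℕ) = (j : ℕ) then ‖B i l‖ * ‖V j l‖ else 0) := by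
        refine Finset.sum_le_sum (fun i _ => Finset.sum_le_sum (fun j _ => ?_))
        by_cases h : (i : ℕ) = (j : ℕ)
        · simp only [if_pos h]
          rw [hXrep i j]
          refine (norm_sum_le _ _).trans ?_
          refine le_of_eq (Finset.sum_congr rfl (fun l _ => ?_))
          rw [norm_mul, Complex.norm_conj]
        · simp only [if_neg h]
          simp
    _ = ∑ l : Fin n, ∑ i : Fin m, ∑ j : Fin n,
          (if (i : ℕ) = (j : ℕ) then ‖B i l‖ * ‖V j l‖ else 0) := by
        refine Eq.trans (Finset.sum_congr rfl fun i _ => Finset.sum_comm)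
          Finset.sum_comm
    _ ≤ ∑ l : Fin n, Real.sqrt (∑ i : Fin m, ‖B i l‖ ^ 2)
          * Real.sqrt (∑ j : Fin n, ‖V j l‖ ^ 2) := by
        refine Finset.sum_le_sum (fun l _ => ?_)
        exact diag_pair_CS (fun i => ‖B i l‖) (fun j => ‖V j l‖)
          (fun _ => norm_nonneg _) (fun _ => norm_nonneg _)
    _ = ∑ l : Fin n, Real.sqrt (lam l) := by
        refine Finset.sum_congr rfl (fun l _ => ?_)
        rw [hBcol l, hVcol l, Real.sqrt_one, mul_one]
    _ = nuclearNorm X := (nuclearNorm_eq_sum_sqrt X).symm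

lemma nuclearNorm_rectDiag {m n : ℕ} (c : Fin m → ℝ) (hc : ∀ i, 0 ≤ c i) :
    nuclearNorm (Matrix.of fun (i : Fin m) (j : Fin n) =>
        if (i : ℕ) = (j : ℕ) then (c i : ℂ) else 0)
      = ∑ i : Fin m, ∑ j : Fin n, (if (i : ℕ) = (j : ℕ) then c i else 0) := by
  set D : Matrix (Fin m) (Fin n) ℂ := Matrix.of fun (i : Fin m) (j : Fin n) =>
    if (i : ℕ) = (j : ℕ) then (c i : ℂ) else 0 with hD
  set g : Fin n → ℝ := fun j => if h : (j : ℕ) < m then c ⟨(j : ℕ), h⟩ else 0 with hg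
  have hg0 : ∀ j, 0 ≤ g j := fun j => by
    by_cases h : (j : ℕ) < m
    · simp only [hg, dif_pos h]; exact hc _
    · simp only [hg, dif_neg h]
      exact le_rfl
  have step1 : Dᴴ * D = Matrix.diagonal (fun j => ((g j : ℝ) : ℂ) ^ 2) := by
    ext j k
    rw [Matrix.mul_apply]
    by_cases hjk : j = k
    · subst hjk
      rw [Matrix.diagonal_apply_eq]
      by_cases h : (j : ℕ) < m
      · rw [Finset.sum_eq_single_of_mem (⟨(j : ℕ), h⟩ : Fin m) (Finset.mem_univ _)]
        · simp only [Matrix.conjTranspose_apply, hD, Matrix.of_apply, hg, dif_pos h]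
          simp only [if_true]
          rw [show (star ((c ⟨(j : ℕ), h⟩ : ℝ) : ℂ)) = ((c ⟨(j : ℕ), h⟩ : ℝ) : ℂ) from
            Complex.conj_ofReal _]
          ring
        · intro b _ hb
          simp only [Matrix.conjTranspose_apply, hD, Matrix.of_apply]
          rw [if_neg, star_zero, zero_mul]
          intro hbj
          exact hb (Fin.ext hbj)
      · rw [Finset.sum_eq_zero, show g j = 0 from dif_neg h]
        · norm_num
        · intro b _
          simp only [Matrix.conjTranspose_apply, hD, Matrix.of_apply]
          rw [if_neg, star_zero, zero_mul]
          intro hbj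
          exact h (hbj ▸ b.isLt)
    · rw [Matrix.diagonal_apply_ne _ hjk]
      refine Finset.sum_eq_zero (fun b _ => ?_)
      simp only [Matrix.conjTranspose_apply, hD, Matrix.of_apply]
      by_cases hbj : (b : ℕ) = (j : ℕ)
      · rw [show (if (b : ℕ) = (k : ℕ) then ((c b : ℝ) : ℂ) else 0) = 0 from
            if_neg (fun hbk => hjk (Fin.ext (hbj.symm.trans hbk))), mul_zero]
      · rw [if_neg hbj, star_zero, zero_mul]
  have hpsd2 : (Matrix.diagonal (fun j => ((g j : ℝ) : ℂ) ^ 2)).PosSemidef := by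
    refine Matrix.PosSemidef.diagonal (fun j => ?_)
    rw [Pi.zero_apply]
    rw [show (((g j : ℝ) : ℂ)) ^ 2 = (((g j ^ 2 : ℝ)) : ℂ) by push_cast; ring]
    rw [← Complex.ofReal_zero, Complex.real_le_real]
    exact sq_nonneg _
  have hpsd1 : (Matrix.diagonal (fun j => ((g j : ℝ) : ℂ))).PosSemidef := by
    refine Matrix.PosSemidef.diagonal (fun j => ?_)
    rw [Pi.zero_apply]
    rw [← Complex.ofReal_zero, Complex.real_le_real]
    exact hg0 j
  have hsqrt : hpsd2.sqrt = Matrix.diagonal (fun j => ((g j : ℝ) : ℂ)) := by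
    refine (hpsd1.eq_sqrt_of_sq_eq hpsd2 ?_).symm
    rw [pow_two, Matrix.diagonal_mul_diagonal]
    congr 1
    ext j
    ring
  rw [nuclearNorm_eq_sqrt_trace]
  rw [sqrt_congr (Matrix.posSemidef_conjTranspose_mul_self D) hpsd2 step1, hsqrt,
    Matrix.trace_diagonal, Complex.re_sum]
  have lhs_eq : ∑ j : Fin n, (((g j : ℝ) : ℂ)).re = ∑ j : Fin n, g j :=
    Finset.sum_congr rfl (fun j _ => Complex.ofReal_re _)
  rw [lhs_eq]
  -- now show ∑ j, g j = double diagonal sum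
  have rhs_eq : ∑ i : Fin m, ∑ j : Fin n, (if (i : ℕ) = (j : ℕ) then c i else 0)
      = ∑ k ∈ Finset.range (min m n), (if h : k < m ∧ k < n then c ⟨k, h.1⟩ else 0) := by
    rw [diag_double_sum (fun i _ => c i)]
  rw [rhs_eq]
  have lhs2 : ∑ j : Fin n, g j
      = ∑ k ∈ Finset.range n, (if h : k < m then c ⟨k, h⟩ else 0) :=
    Fin.sum_univ_eq_sum_range (fun k => if h : k < m then c ⟨k, h⟩ else 0) n
  rw [lhs2]
  rw [show (∑ k ∈ Finset.range n, if h : k < m then c ⟨k, h⟩ else 0)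
      = ∑ k ∈ Finset.range (min m n), (if h : k < m then c ⟨k, h⟩ else 0) from
    (Finset.sum_subset (Finset.range_subset_range.mpr (min_le_right m n)) (fun x hx hnx => by
      rw [Finset.mem_range] at hx
      rw [Finset.mem_range, not_lt] at hnx
      exact dif_neg (fun hxm => absurd (lt_min hxm hx) (not_lt.mpr hnx))) ).symm]
  refine Finset.sum_congr rfl (fun k hk => ?_)
  rw [Finset.mem_range, lt_min_iff] at hk
  rw [dif_pos hk.1, dif_pos ⟨hk.1, hk.2⟩]

lemma scalar_abs2 (σ : ℝ) (z : ℂ) :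
    ‖z - (σ : ℂ)‖ ^ 2
      = ‖z‖ ^ 2 - 2 * σ * z.re + σ ^ 2 := by
  have h1 : ‖z‖ ^ 2 = z.re ^ 2 + z.im ^ 2 := by
    rw [Complex.sq_norm, Complex.normSq_apply]; ring
  have h2 : ‖z - (σ : ℂ)‖ ^ 2 = (z.re - σ) ^ 2 + z.im ^ 2 := by
    rw [Complex.sq_norm, Complex.normSq_apply]
    simp [Complex.sub_re, Complex.sub_im]
    ring
  rw [h1, h2]; ring

lemma scalar_le (τ σ : ℝ) (hτ : 0 < τ) (hσ : 0 ≤ σ) (z : ℂ) :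
    τ * max (σ - τ) 0 + (1 / 2) * (max (σ - τ) 0 - σ) ^ 2
      ≤ τ * ‖z‖ + (1 / 2) * ‖z - (σ : ℂ)‖ ^ 2 := by
  rw [scalar_abs2]
  have hxt : z.re ≤ ‖z‖ := Complex.re_le_norm z
  have ht0 : 0 ≤ ‖z‖ := norm_nonneg z
  rcases le_or_gt τ σ with hc | hc
  · rw [max_eq_left (by linarith)]
    nlinarith [sq_nonneg (‖z‖ - (σ - τ)), mul_nonneg hσ (sub_nonneg.mpr hxt)]
  · rw [max_eq_right (by linarith)]
    nlinarith [mul_nonneg ht0 (by linarith : (0:ℝ) ≤ τ - σ + (1/2) * ‖z‖),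
      mul_nonneg hσ (sub_nonneg.mpr hxt)]

lemma scalar_eq (τ σ : ℝ) (hτ : 0 < τ) (hσ : 0 ≤ σ) (z : ℂ)
    (heq : τ * max (σ - τ) 0 + (1 / 2) * (max (σ - τ) 0 - σ) ^ 2
      = τ * ‖z‖ + (1 / 2) * ‖z - (σ : ℂ)‖ ^ 2) :
    z = ((max (σ - τ) 0 : ℝ) : ℂ) := by
  rw [scalar_abs2] at heq
  have hxt : z.re ≤ ‖z‖ := Complex.re_le_norm z
  have ht0 : 0 ≤ ‖z‖ := norm_nonneg z
  have habs : ‖z‖ ^ 2 = z.re ^ 2 + z.im ^ 2 := by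
    rw [Complex.sq_norm, Complex.normSq_apply]; ring
  rcases le_or_gt τ σ with hc | hc
  · rw [max_eq_left (by linarith)] at heq ⊢
    -- slack identity: 0 = (1/2)(t - (σ-τ))² + σ(t - x)
    have key : (1 / 2) * (‖z‖ - (σ - τ)) ^ 2
        + σ * (‖z‖ - z.re) = 0 := by nlinarith
    have h1 : ‖z‖ = σ - τ := by
      nlinarith [sq_nonneg (‖z‖ - (σ - τ)),
        mul_nonneg hσ (sub_nonneg.mpr hxt)]
    have h2 : z.re = ‖z‖ := by
      have hσ' : 0 < σ := lt_of_lt_of_le hτ hc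
      nlinarith [sq_nonneg (‖z‖ - (σ - τ))]
    have him : z.im = 0 := by nlinarith [sq_nonneg z.im]
    have hre : z.re = σ - τ := h2.trans h1
    apply Complex.ext
    · simpa using hre
    · simpa using him
  · rw [max_eq_right (by linarith)] at heq ⊢
    have h1 : ‖z‖ = 0 := by
      nlinarith [mul_nonneg ht0 (by linarith : (0:ℝ) ≤ τ - σ + (1/2) * ‖z‖),
        mul_nonneg hσ (sub_nonneg.mpr hxt)]
    rw [show ((0 : ℝ) : ℂ) = 0 from rfl]
    exact norm_eq_zero.mp h1

section central
variable {m n : ℕ} (τ : ℝ) (σ : Fin m → ℝ)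

/-- split the Frobenius term entrywise -/
lemma frob_split (X : Matrix (Fin m) (Fin n) ℂ) :
    frobM2 (X - Matrix.of fun (i : Fin m) (j : Fin n) =>
        if (i : ℕ) = (j : ℕ) then (σ i : ℂ) else 0)
      = ∑ i : Fin m, ∑ j : Fin n,
          (if (i : ℕ) = (j : ℕ) then ‖X i j - (σ i : ℂ)‖ ^ 2
           else ‖X i j‖ ^ 2) := by
  unfold frobM2
  refine Finset.sum_congr rfl (fun i _ => Finset.sum_congr rfl (fun j _ => ?_))
  by_cases h : (i : ℕ) = (j : ℕ)
  · rw [if_pos h]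
    simp only [Matrix.sub_apply, Matrix.of_apply, if_pos h]
  · rw [if_neg h]
    simp only [Matrix.sub_apply, Matrix.of_apply, if_neg h, sub_zero]

lemma central (hτ : 0 < τ) (hσ : ∀ i, 0 ≤ σ i) (X : Matrix (Fin m) (Fin n) ℂ) :
    (τ * nuclearNorm (Matrix.of fun (i : Fin m) (j : Fin n) =>
        if (i : ℕ) = (j : ℕ) then ((max (σ i - τ) 0 : ℝ) : ℂ) else 0)
      + (1 / 2) * frobM2 ((Matrix.of fun (i : Fin m) (j : Fin n) =>
          if (i : ℕ) = (j : ℕ) then ((max (σ i - τ) 0 : ℝ) : ℂ) else 0)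
        - Matrix.of fun (i : Fin m) (j : Fin n) =>
          if (i : ℕ) = (j : ℕ) then (σ i : ℂ) else 0)
      ≤ τ * nuclearNorm X + (1 / 2) * frobM2 (X - Matrix.of fun (i : Fin m) (j : Fin n) =>
          if (i : ℕ) = (j : ℕ) then (σ i : ℂ) else 0)) ∧
    (τ * nuclearNorm X + (1 / 2) * frobM2 (X - Matrix.of fun (i : Fin m) (j : Fin n) =>
          if (i : ℕ) = (j : ℕ) then (σ i : ℂ) else 0)
      = τ * nuclearNorm (Matrix.of fun (i : Fin m) (j : Fin n) =>
        if (i : ℕ) = (j : ℕ) then ((max (σ i - τ) 0 : ℝ) : ℂ) else 0)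
      + (1 / 2) * frobM2 ((Matrix.of fun (i : Fin m) (j : Fin n) =>
          if (i : ℕ) = (j : ℕ) then ((max (σ i - τ) 0 : ℝ) : ℂ) else 0)
        - Matrix.of fun (i : Fin m) (j : Fin n) =>
          if (i : ℕ) = (j : ℕ) then (σ i : ℂ) else 0)
      → X = Matrix.of fun (i : Fin m) (j : Fin n) =>
          if (i : ℕ) = (j : ℕ) then ((max (σ i - τ) 0 : ℝ) : ℂ) else 0) := by
  set D : Matrix (Fin m) (Fin n) ℂ := Matrix.of fun (i : Fin m) (j : Fin n) =>
    if (i : ℕ) = (j : ℕ) then ((max (σ i - τ) 0 : ℝ) : ℂ) else 0 with hD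
  -- value of the objective at D
  have hGD : τ * nuclearNorm D + (1 / 2) * frobM2 (D - Matrix.of fun (i : Fin m) (j : Fin n) =>
        if (i : ℕ) = (j : ℕ) then (σ i : ℂ) else 0)
      = ∑ i : Fin m, ∑ j : Fin n, (if (i : ℕ) = (j : ℕ) then
          τ * max (σ i - τ) 0 + (1 / 2) * (max (σ i - τ) 0 - σ i) ^ 2 else 0) := by
    rw [frob_split σ D, nuclearNorm_rectDiag (fun i => max (σ i - τ) 0)
      (fun i => le_max_right _ _)]
    rw [Finset.mul_sum, Finset.mul_sum, ← Finset.sum_add_distrib]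
    refine Finset.sum_congr rfl (fun i _ => ?_)
    rw [Finset.mul_sum, Finset.mul_sum, ← Finset.sum_add_distrib]
    refine Finset.sum_congr rfl (fun j _ => ?_)
    by_cases h : (i : ℕ) = (j : ℕ)
    · simp only [if_pos h, hD, Matrix.of_apply]
      rw [show ((max (σ i - τ) 0 : ℝ) : ℂ) - (σ i : ℂ) = ((max (σ i - τ) 0 - σ i : ℝ) : ℂ) by
        push_cast; ring]
      rw [Complex.norm_real, Real.norm_eq_abs, _root_.sq_abs]
    · simp only [if_neg h, hD, Matrix.of_apply, mul_zero, add_zero]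
      simp
  -- lower bound for the objective at X
  have hlow : ∑ i : Fin m, ∑ j : Fin n,
        (if (i : ℕ) = (j : ℕ) then
          τ * ‖X i j‖ + (1 / 2) * ‖X i j - (σ i : ℂ)‖ ^ 2
         else (1 / 2) * ‖X i j‖ ^ 2)
      ≤ τ * nuclearNorm X + (1 / 2) * frobM2 (X - Matrix.of fun (i : Fin m) (j : Fin n) =>
          if (i : ℕ) = (j : ℕ) then (σ i : ℂ) else 0) := by
    rw [frob_split σ X]
    have h1 : τ * (∑ i : Fin m, ∑ j : Fin n,
        (if (i : ℕ) = (j : ℕ) then ‖X i j‖ else 0)) ≤ τ * nuclearNorm X :=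
      mul_le_mul_of_nonneg_left (diag_abs_le_nuclearNorm X) (le_of_lt hτ)
    refine le_trans (le_of_eq ?_) (add_le_add h1 (le_refl _))
    rw [Finset.mul_sum, Finset.mul_sum, ← Finset.sum_add_distrib]
    refine Finset.sum_congr rfl (fun i _ => ?_)
    rw [Finset.mul_sum, Finset.mul_sum, ← Finset.sum_add_distrib]
    refine Finset.sum_congr rfl (fun j _ => ?_)
    by_cases h : (i : ℕ) = (j : ℕ)
    · simp only [if_pos h]
    · simp only [if_neg h, mul_zero, zero_add]
  -- termwise comparison
  have hterm : ∀ (i : Fin m) (j : Fin n),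
      (if (i : ℕ) = (j : ℕ) then
          τ * max (σ i - τ) 0 + (1 / 2) * (max (σ i - τ) 0 - σ i) ^ 2 else 0)
      ≤ (if (i : ℕ) = (j : ℕ) then
          τ * ‖X i j‖ + (1 / 2) * ‖X i j - (σ i : ℂ)‖ ^ 2
         else (1 / 2) * ‖X i j‖ ^ 2) := by
    intro i j
    by_cases h : (i : ℕ) = (j : ℕ)
    · rw [if_pos h, if_pos h]
      exact scalar_le τ (σ i) hτ (hσ i) (X i j)
    · rw [if_neg h, if_neg h]
      positivity
  constructor
  · rw [hGD]
    refine le_trans (Finset.sum_le_sum (fun i _ => Finset.sum_le_sum (fun j _ => hterm i j)))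
      hlow
  · intro heq
    have hsum : ∑ i : Fin m, ∑ j : Fin n,
        ((if (i : ℕ) = (j : ℕ) then
          τ * ‖X i j‖ + (1 / 2) * ‖X i j - (σ i : ℂ)‖ ^ 2
         else (1 / 2) * ‖X i j‖ ^ 2)
        - (if (i : ℕ) = (j : ℕ) then
          τ * max (σ i - τ) 0 + (1 / 2) * (max (σ i - τ) 0 - σ i) ^ 2 else 0)) = 0 := by
      have h2 : ∑ i : Fin m, ∑ j : Fin n,
          ((if (i : ℕ) = (j : ℕ) then
            τ * ‖X i j‖ + (1 / 2) * ‖X i j - (σ i : ℂ)‖ ^ 2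
           else (1 / 2) * ‖X i j‖ ^ 2)
          - (if (i : ℕ) = (j : ℕ) then
            τ * max (σ i - τ) 0 + (1 / 2) * (max (σ i - τ) 0 - σ i) ^ 2 else 0))
          ≤ 0 := by
        simp only [Finset.sum_sub_distrib]
        rw [← hGD]
        rw [heq] at hlow
        linarith
      have h3 : 0 ≤ ∑ i : Fin m, ∑ j : Fin n,
          ((if (i : ℕ) = (j : ℕ) then
            τ * ‖X i j‖ + (1 / 2) * ‖X i j - (σ i : ℂ)‖ ^ 2
           else (1 / 2) * ‖X i j‖ ^ 2)
          - (if (i : ℕ) = (j : ℕ) then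
            τ * max (σ i - τ) 0 + (1 / 2) * (max (σ i - τ) 0 - σ i) ^ 2 else 0)) :=
        Finset.sum_nonneg (fun i _ => Finset.sum_nonneg (fun j _ =>
          sub_nonneg.mpr (hterm i j)))
      linarith
    have hzero : ∀ i ∈ (Finset.univ : Finset (Fin m)), ∀ j ∈ (Finset.univ : Finset (Fin n)),
        ((if (i : ℕ) = (j : ℕ) then
            τ * ‖X i j‖ + (1 / 2) * ‖X i j - (σ i : ℂ)‖ ^ 2
           else (1 / 2) * ‖X i j‖ ^ 2)
          - (if (i : ℕ) = (j : ℕ) then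
            τ * max (σ i - τ) 0 + (1 / 2) * (max (σ i - τ) 0 - σ i) ^ 2 else 0)) = 0 := by
      have houter := (Finset.sum_eq_zero_iff_of_nonneg (fun i _ =>
        Finset.sum_nonneg (fun j _ => sub_nonneg.mpr (hterm i j)))).mp hsum
      intro i hi j hj
      have hinner := (Finset.sum_eq_zero_iff_of_nonneg (fun j _ =>
        sub_nonneg.mpr (hterm i j))).mp (houter i hi)
      exact hinner j hj
    ext i j
    have hz := hzero i (Finset.mem_univ i) j (Finset.mem_univ j)
    by_cases h : (i : ℕ) = (j : ℕ)
    · rw [if_pos h, if_pos h] at hz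
      have : τ * max (σ i - τ) 0 + (1 / 2) * (max (σ i - τ) 0 - σ i) ^ 2
          = τ * ‖X i j‖ + (1 / 2) * ‖X i j - (σ i : ℂ)‖ ^ 2 := by
        linarith
      have := scalar_eq τ (σ i) hτ (hσ i) (X i j) this
      rw [this, hD]
      simp only [Matrix.of_apply, if_pos h]
    · rw [if_neg h, if_neg h, sub_zero] at hz
      have habs : ‖X i j‖ = 0 := by
        have := sq_eq_zero_iff.mp (by linarith : ‖X i j‖ ^ 2 = 0)
        exact this
      rw [norm_eq_zero.mp habs, hD]
      simp only [Matrix.of_apply, if_neg h]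
end central

/-- Singular value thresholding solves the nuclear-norm proximal problem: if
`Y = U Σ V*` is an SVD of `Y` and `τ > 0`, then `W₀ = U D_τ(Σ) V*` with
`D_τ(Σ) = diag(max (σ i - τ) 0)` is the unique minimizer of
`τ ‖W‖_* + (1/2) ‖W - Y‖_F²`. -/

theorem svt_prox {m n : ℕ}
    (Y : Matrix (Fin m) (Fin n) ℂ) (τ : ℝ) (hτ : 0 < τ)
    (U : Matrix (Fin m) (Fin m) ℂ) (V : Matrix (Fin n) (Fin n) ℂ)
    (hU : U ∈ Matrix.unitaryGroup (Fin m) ℂ) (hV : V ∈ Matrix.unitaryGroup (Fin n) ℂ)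
    (σ : Fin m → ℝ) (hσ : ∀ i, 0 ≤ σ i)
    (hY : Y = U * (Matrix.of fun (i : Fin m) (j : Fin n) =>
      if (i : ℕ) = (j : ℕ) then (σ i : ℂ) else 0) * Vᴴ) :
    let W₀ : Matrix (Fin m) (Fin n) ℂ := U * (Matrix.of fun (i : Fin m) (j : Fin n) =>
      if (i : ℕ) = (j : ℕ) then ((max (σ i - τ) 0 : ℝ) : ℂ) else 0) * Vᴴ
    (∀ W : Matrix (Fin m) (Fin n) ℂ,
      τ * nuclearNorm W₀ + (1 / 2) * frobM2 (W₀ - Y) ≤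
        τ * nuclearNorm W + (1 / 2) * frobM2 (W - Y)) ∧
    (∀ W : Matrix (Fin m) (Fin n) ℂ,
      τ * nuclearNorm W + (1 / 2) * frobM2 (W - Y) =
        τ * nuclearNorm W₀ + (1 / 2) * frobM2 (W₀ - Y) → W = W₀) := by
  intro W₀
  set S : Matrix (Fin m) (Fin n) ℂ := Matrix.of fun (i : Fin m) (j : Fin n) =>
    if (i : ℕ) = (j : ℕ) then (σ i : ℂ) else 0 with hS
  set D : Matrix (Fin m) (Fin n) ℂ := Matrix.of fun (i : Fin m) (j : Fin n) =>
    if (i : ℕ) = (j : ℕ) then ((max (σ i - τ) 0 : ℝ) : ℂ) else 0 with hDdef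
  have hW₀ : W₀ = U * D * Vᴴ := rfl
  have hUU : U * Uᴴ = 1 := Matrix.mem_unitaryGroup_iff.mp hU
  have hUU' : Uᴴ * U = 1 := Matrix.mem_unitaryGroup_iff'.mp hU
  have hVV : V * Vᴴ = 1 := Matrix.mem_unitaryGroup_iff.mp hV
  have hVV' : Vᴴ * V = 1 := Matrix.mem_unitaryGroup_iff'.mp hV
  have hrep : ∀ W : Matrix (Fin m) (Fin n) ℂ, U * (Uᴴ * W * V) * Vᴴ = W := by
    intro W
    calc U * (Uᴴ * W * V) * Vᴴ = (U * Uᴴ) * W * (V * Vᴴ) := by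
          simp only [Matrix.mul_assoc]
      _ = W := by rw [hUU, hVV, Matrix.one_mul, Matrix.mul_one]
  have hback : ∀ X : Matrix (Fin m) (Fin n) ℂ, Uᴴ * (U * X * Vᴴ) * V = X := by
    intro X
    calc Uᴴ * (U * X * Vᴴ) * V = (Uᴴ * U) * X * (Vᴴ * V) := by
          simp only [Matrix.mul_assoc]
      _ = X := by rw [hUU', hVV', Matrix.one_mul, Matrix.mul_one]
  have obj : ∀ W : Matrix (Fin m) (Fin n) ℂ,
      τ * nuclearNorm W + (1 / 2) * frobM2 (W - Y)
        = τ * nuclearNorm (Uᴴ * W * V) + (1 / 2) * frobM2 ((Uᴴ * W * V) - S) := by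
    intro W
    set X := Uᴴ * W * V with hX
    have h1 : W = U * X * Vᴴ := (hrep W).symm
    have h2 : W - Y = U * (X - S) * Vᴴ := by
      rw [hY, Matrix.mul_sub, Matrix.sub_mul]
      rw [h1]
    rw [h2, frobM2_unitary U V hU hV]
    conv_lhs => rw [h1, nuclearNorm_unitary U V hU hV]
  have hObjW₀ : τ * nuclearNorm W₀ + (1 / 2) * frobM2 (W₀ - Y)
      = τ * nuclearNorm D + (1 / 2) * frobM2 (D - S) := by
    rw [obj W₀, hW₀, hback D]
  constructor
  · intro W
    rw [hObjW₀, obj W]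
    exact (central τ σ hτ hσ (Uᴴ * W * V)).1
  · intro W hWeq
    rw [hObjW₀, obj W] at hWeq
    have := (central τ σ hτ hσ (Uᴴ * W * V)).2 hWeq
    rw [← hrep W, this, hW₀]
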